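/- (Optimal loading for the ruin probability under logit demand.) Let λ, E, r, β₁ > 0 and β₀ ∈ ℝ. Define p(θ) = 1/(1 + e^{β₀+β₁θ}), c(θ) = (1+θ) λ p(θ) E − r, α(θ) = λ p(θ)/c(θ), and θ* = (1/β₁)( ln( λE/(r β₁) ) − β₀ ). If c(θ*) > 0, then θ* is the unique global minimizer of α over the set {θ ∈ ℝ : c(θ) > 0}. -/

import Mathlib

open Real

/-- The logit demand (market share) function `p(θ) = 1/(1 + e^{β₀+β₁θ})`. -/
noncomputable def logitP (β₀ β₁ θ : ℝ) : ℝ := 1 / (1 + Real.exp (β₀ + β₁ * θ))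

/-- The net premium income rate `c(θ) = (1+θ) λ p(θ) E − r`. -/
noncomputable def premRate (lam E r β₀ β₁ θ : ℝ) : ℝ :=
  (1 + θ) * lam * logitP β₀ β₁ θ * E - r

/-- `α(θ) = λ p(θ) / c(θ)`, the quantity the ruin probability is increasing in. -/
noncomputable def alphaLoad (lam E r β₀ β₁ θ : ℝ) : ℝ :=
  lam * logitP β₀ β₁ θ / premRate lam E r β₀ β₁ θ

/-- The candidate optimal loading `θ* = (1/β₁)(ln(λE/(rβ₁)) − β₀)`. -/
noncomputable def thetaRuin (lam E r β₀ β₁ : ℝ) : ℝ :=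
  (1 / β₁) * (Real.log (lam * E / (r * β₁)) - β₀)

/-- optimal loading for the ruin probability under logit demand:
if `c(θ*) > 0` then `θ*` is the unique global minimizer of `α` over `{θ : c(θ) > 0}`. -/
theorem optimal_loading_ruin (lam E r β₀ β₁ : ℝ)
    (hlam : 0 < lam) (hE : 0 < E) (hr : 0 < r) (hβ₁ : 0 < β₁)
    (hcs : 0 < premRate lam E r β₀ β₁ (thetaRuin lam E r β₀ β₁)) :
    ∀ θ : ℝ, 0 < premRate lam E r β₀ β₁ θ → θ ≠ thetaRuin lam E r β₀ β₁ →
      alphaLoad lam E r β₀ β₁ (thetaRuin lam E r β₀ β₁) < alphaLoad lam E r β₀ β₁ θ := by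
  intro θ hc hne
  set s := thetaRuin lam E r β₀ β₁ with hs
  have hβne : β₁ ≠ 0 := hβ₁.ne'
  have hlamne : lam ≠ 0 := hlam.ne'
  have hpos : 0 < lam * E / (r * β₁) := by positivity
  have hus : Real.exp (β₀ + β₁ * s) = lam * E / (r * β₁) := by
    rw [hs]
    unfold thetaRuin
    rw [show β₀ + β₁ * (1 / β₁ * (Real.log (lam * E / (r * β₁)) - β₀))
        = Real.log (lam * E / (r * β₁)) by field_simp; ring]
    exact Real.exp_log hpos
  have hE' : E = r / lam * (β₁ * Real.exp (β₀ + β₁ * s)) := by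
    rw [hus]; field_simp
  have hx : β₁ * (θ - s) ≠ 0 := by
    intro h
    rcases mul_eq_zero.mp h with h | h
    · exact hβne h
    · exact hne (by linarith [sub_eq_zero.mp h])
  have hexp : 1 + β₁ * (θ - s) < Real.exp (β₁ * (θ - s)) := by
    have := Real.add_one_lt_exp hx; linarith
  -- the key inequality for g(θ) = (1+θ)E - (r/λ)(1+e^{β₀+β₁θ})
  have hkey : (1 + θ) * E - r / lam * (1 + Real.exp (β₀ + β₁ * θ)) <
      (1 + s) * E - r / lam * (1 + Real.exp (β₀ + β₁ * s)) := by
    have hexp2 : Real.exp (β₀ + β₁ * θ)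
        = Real.exp (β₀ + β₁ * s) * Real.exp (β₁ * (θ - s)) := by
      rw [← Real.exp_add]; ring_nf
    rw [hexp2, hE']
    have hu : 0 < Real.exp (β₀ + β₁ * s) := Real.exp_pos _
    have hrl : 0 < r / lam := by positivity
    nlinarith [mul_pos (mul_pos hrl hu) (sub_pos.mpr hexp)]
  have hprem : ∀ t : ℝ, premRate lam E r β₀ β₁ t =
      lam * logitP β₀ β₁ t * ((1 + t) * E - r / lam * (1 + Real.exp (β₀ + β₁ * t))) := by
    intro t
    unfold premRate logitP
    have h1 : (0:ℝ) < 1 + Real.exp (β₀ + β₁ * t) := by positivity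
    field_simp
  have hlpθ : 0 < lam * logitP β₀ β₁ θ := by
    unfold logitP; positivity
  have hlps : 0 < lam * logitP β₀ β₁ s := by
    unfold logitP; positivity
  have hgθ : 0 < (1 + θ) * E - r / lam * (1 + Real.exp (β₀ + β₁ * θ)) := by
    have := hc; rw [hprem θ] at this; nlinarith
  have hgs : 0 < (1 + s) * E - r / lam * (1 + Real.exp (β₀ + β₁ * s)) := by
    have := hcs; rw [hprem s] at this; nlinarith
  unfold alphaLoad
  rw [div_lt_div_iff₀ hcs hc, hprem θ, hprem s]
  nlinarith [mul_pos hlpθ hlps, hkey]
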